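/- Post-processing preserves parallel compatibility: if instruments I₁ and I₂ are parallel compatible, and Ĩ₁ ≲ I₁ and Ĩ₂ ≲ I₂ are post-processings of them, then Ĩ₁ and Ĩ₂ are parallel compatible. -/

import Mathlib

open Matrix
open scoped Kronecker BigOperators ComplexOrder

noncomputable section

namespace QI

/-- Linear maps between matrix algebras (superoperators). -/
abbrev MatMap (n m : Type*) [Fintype n] [Fintype m] :=
  Matrix n n ℂ →ₗ[ℂ] Matrix m m ℂ

variable {n m m₁ m₂ ι ι₁ ι₂ : Type*}

/-- The Choi matrix of a superoperator. -/
def choi [Fintype n] [DecidableEq n] [Fintype m] (Φ : MatMap n m) :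
    Matrix (n × m) (n × m) ℂ :=
  Matrix.of fun p q => Φ (Matrix.single p.1 q.1 1) p.2 q.2

/-- Complete positivity, via positive semidefiniteness of the Choi matrix. -/
def IsCP [Fintype n] [DecidableEq n] [Fintype m] (Φ : MatMap n m) : Prop :=
  (choi Φ).PosSemidef

/-- Trace preserving map. -/
def IsTP [Fintype n] [Fintype m] (Φ : MatMap n m) : Prop :=
  ∀ ρ, (Φ ρ).trace = ρ.trace

/-- Trace non-increasing map (on positive semidefinite inputs). -/
def IsTNI [Fintype n] [Fintype m] (Φ : MatMap n m) : Prop :=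
  ∀ ρ : Matrix n n ℂ, ρ.PosSemidef → (Φ ρ).trace.re ≤ ρ.trace.re

/-- A quantum channel: CP and trace preserving. -/
def IsChannel [Fintype n] [DecidableEq n] [Fintype m] (Φ : MatMap n m) : Prop :=
  IsCP Φ ∧ IsTP Φ

/-- A quantum instrument: a finite family of CP maps summing to a TP map. -/
structure Instrument (ι n m : Type*) [Fintype ι] [Fintype n] [DecidableEq n] [Fintype m] where
  op : ι → MatMap n m
  cp : ∀ x, IsCP (op x)
  tp : IsTP (∑ x, op x)

/-- Partial trace over the second tensor factor, as a linear map. -/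
def ptrace₂ [Fintype m₁] [Fintype m₂] :
    Matrix (m₁ × m₂) (m₁ × m₂) ℂ →ₗ[ℂ] Matrix m₁ m₁ ℂ where
  toFun M := Matrix.of fun i j => ∑ k, M (i, k) (j, k)
  map_add' M N := by ext i j; simp [Finset.sum_add_distrib]
  map_smul' c M := by ext i j; simp [Finset.mul_sum]

/-- Partial trace over the first tensor factor, as a linear map. -/
def ptrace₁ [Fintype m₁] [Fintype m₂] :
    Matrix (m₁ × m₂) (m₁ × m₂) ℂ →ₗ[ℂ] Matrix m₂ m₂ ℂ where
  toFun M := Matrix.of fun i j => ∑ k, M (k, i) (k, j)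
  map_add' M N := by ext i j; simp [Finset.sum_add_distrib]
  map_smul' c M := by ext i j; simp [Finset.mul_sum]

/-- Parallel compatibility of two instruments. -/
def ParallelCompatible [Fintype ι₁] [Fintype ι₂] [Fintype n] [DecidableEq n]
    [Fintype m₁] [Fintype m₂]
    (I₁ : Instrument ι₁ n m₁) (I₂ : Instrument ι₂ n m₂) : Prop :=
  ∃ J : Instrument (ι₁ × ι₂) n (m₁ × m₂),
    (∀ x, ∑ y, ptrace₂ ∘ₗ J.op (x, y) = I₁.op x) ∧
    (∀ y, ∑ x, ptrace₁ ∘ₗ J.op (x, y) = I₂.op y)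

/-- The dual (Heisenberg picture) of a superoperator, characterized by
`tr[Φ(ρ) M] = tr[ρ Φ*(M)]`. -/
def dualMap [Fintype n] [DecidableEq n] [Fintype m] (Φ : MatMap n m) (M : Matrix m m ℂ) :
    Matrix n n ℂ :=
  Matrix.of fun i j => (Φ (Matrix.single j i 1) * M).trace

/-- A POVM: positive semidefinite effects summing to the identity. -/
def IsPOVM [Fintype n] [DecidableEq n] (A : ι → Matrix n n ℂ) [Fintype ι] : Prop :=
  (∀ x, (A x).PosSemidef) ∧ ∑ x, A x = 1

/-- The POVM induced by an instrument: `A(x) = Φ_x*(𝟙)`. -/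
def inducedPOVM [Fintype ι] [Fintype n] [DecidableEq n] [Fintype m] [DecidableEq m]
    (I : Instrument ι n m) (x : ι) : Matrix n n ℂ :=
  dualMap (I.op x) 1

/-- Compatibility of two POVMs via a joint POVM. -/
def POVMsCompatible [Fintype ι₁] [Fintype ι₂] [Fintype n] [DecidableEq n]
    (A₁ : ι₁ → Matrix n n ℂ) (A₂ : ι₂ → Matrix n n ℂ) : Prop :=
  ∃ G : ι₁ × ι₂ → Matrix n n ℂ, IsPOVM G ∧
    (∀ x, ∑ y, G (x, y) = A₁ x) ∧ (∀ y, ∑ x, G (x, y) = A₂ y)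

/-- Compatibility of two channels via a joint channel. -/
def ChannelsCompatible [Fintype n] [DecidableEq n] [Fintype m₁] [Fintype m₂]
    (Φ₁ : MatMap n m₁) (Φ₂ : MatMap n m₂) : Prop :=
  ∃ Λ : MatMap n (m₁ × m₂), IsChannel Λ ∧
    ptrace₂ ∘ₗ Λ = Φ₁ ∧ ptrace₁ ∘ₗ Λ = Φ₂

/-- Generalized incompatibility robustness of a pair of instruments. -/
def RI [Fintype ι₁] [Fintype ι₂] [Fintype n] [DecidableEq n]
    [Fintype m₁] [Fintype m₂]
    (I₁ : Instrument ι₁ n m₁) (I₂ : Instrument ι₂ n m₂) : ℝ :=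
  sInf {r : ℝ | 0 ≤ r ∧
    ∃ (N₁ : Instrument ι₁ n m₁) (N₂ : Instrument ι₂ n m₂)
      (J : Instrument (ι₁ × ι₂) n (m₁ × m₂)),
      (∀ x, ((1 + r : ℝ) : ℂ)⁻¹ • (I₁.op x + (r : ℂ) • N₁.op x)
          = ∑ y, ptrace₂ ∘ₗ J.op (x, y)) ∧
      (∀ y, ((1 + r : ℝ) : ℂ)⁻¹ • (I₂.op y + (r : ℂ) • N₂.op y)
          = ∑ x, ptrace₁ ∘ₗ J.op (x, y))}

/-- Generalized incompatibility robustness of a pair of POVMs. -/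
def RM [Fintype ι₁] [Fintype ι₂] [Fintype n] [DecidableEq n]
    (A₁ : ι₁ → Matrix n n ℂ) (A₂ : ι₂ → Matrix n n ℂ) : ℝ :=
  sInf {r : ℝ | 0 ≤ r ∧
    ∃ (B₁ : ι₁ → Matrix n n ℂ) (B₂ : ι₂ → Matrix n n ℂ) (G : ι₁ × ι₂ → Matrix n n ℂ),
      IsPOVM B₁ ∧ IsPOVM B₂ ∧ (∀ p, (G p).PosSemidef) ∧
      (∀ x, ((1 + r : ℝ) : ℂ)⁻¹ • (A₁ x + (r : ℂ) • B₁ x) = ∑ y, G (x, y)) ∧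
      (∀ y, ((1 + r : ℝ) : ℂ)⁻¹ • (A₂ y + (r : ℂ) • B₂ y) = ∑ x, G (x, y))}

/-- Generalized incompatibility robustness of a pair of channels. -/
def RC [Fintype n] [DecidableEq n] [Fintype m₁] [Fintype m₂]
    (Φ₁ : MatMap n m₁) (Φ₂ : MatMap n m₂) : ℝ :=
  sInf {r : ℝ | 0 ≤ r ∧
    ∃ (N₁ : MatMap n m₁) (N₂ : MatMap n m₂) (Λ : MatMap n (m₁ × m₂)),
      IsChannel N₁ ∧ IsChannel N₂ ∧ IsChannel Λ ∧
      ((1 + r : ℝ) : ℂ)⁻¹ • (Φ₁ + (r : ℂ) • N₁) = ptrace₂ ∘ₗ Λ ∧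
      ((1 + r : ℝ) : ℂ)⁻¹ • (Φ₂ + (r : ℂ) • N₂) = ptrace₁ ∘ₗ Λ}

/-- Post-processing relation on instruments: `I₂ ≲ I₁`. -/
def PostProcessingOf [Fintype ι₁] [Fintype ι₂] [Fintype n] [DecidableEq n]
    [Fintype m₁] [DecidableEq m₁] [Fintype m₂]
    (I₂ : Instrument ι₂ n m₂) (I₁ : Instrument ι₁ n m₁) : Prop :=
  ∃ R : ι₁ → Instrument ι₂ m₁ m₂,
    ∀ y, I₂.op y = ∑ x, (R x).op y ∘ₗ I₁.op x

/-- A density matrix (quantum state). -/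
def IsState [Fintype m] (η : Matrix m m ℂ) : Prop :=
  η.PosSemidef ∧ η.trace = 1

/-- A pure state. -/
def IsPureState [Fintype m] (η : Matrix m m ℂ) : Prop :=
  ∃ v : m → ℂ, (∑ i, star (v i) * v i) = 1 ∧ η = Matrix.vecMulVec v (star v)

/-- The trash-and-prepare map `ρ ↦ tr(ρ) • η`. -/
def trashPrep [Fintype n] [Fintype m] (η : Matrix m m ℂ) : MatMap n m :=
  (Matrix.traceLinearMap n ℂ ℂ).smulRight η

/-- Tensoring with a fixed matrix on the right, as a linear map. -/
def kronRight [Fintype m₁] [Fintype m₂] (B : Matrix m₂ m₂ ℂ) :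
    Matrix m₁ m₁ ℂ →ₗ[ℂ] Matrix (m₁ × m₂) (m₁ × m₂) ℂ where
  toFun A := A ⊗ₖ B
  map_add' A A' := by ext ⟨i, k⟩ ⟨j, l⟩; simp [Matrix.kroneckerMap_apply, add_mul]
  map_smul' c A := by ext ⟨i, k⟩ ⟨j, l⟩; simp [Matrix.kroneckerMap_apply, mul_assoc]

/-- Tensoring with a fixed matrix on the left, as a linear map. -/
def kronLeft [Fintype m₁] [Fintype m₂] (A : Matrix m₁ m₁ ℂ) :
    Matrix m₂ m₂ ℂ →ₗ[ℂ] Matrix (m₁ × m₂) (m₁ × m₂) ℂ where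
  toFun B := A ⊗ₖ B
  map_add' B B' := by ext ⟨i, k⟩ ⟨j, l⟩; simp [Matrix.kroneckerMap_apply, mul_add]
  map_smul' c B := by
    ext ⟨i, k⟩ ⟨j, l⟩
    simp only [Matrix.kroneckerMap_apply, Matrix.smul_apply, smul_eq_mul, RingHom.id_apply]
    ring

/-- Measure-and-prepare operation: `ρ ↦ tr(ρ A) • σ`. -/
def mpOp [Fintype n] [Fintype m] (A : Matrix n n ℂ) (σ : Matrix m m ℂ) : MatMap n m where
  toFun ρ := (ρ * A).trace • σ
  map_add' ρ ρ' := by simp [Matrix.add_mul, Matrix.trace_add, add_smul]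
  map_smul' c ρ := by simp [Matrix.smul_mul, Matrix.trace_smul, smul_smul]

/-- Conjugation by a Kraus operator: `ρ ↦ K ρ K†`. -/
def krausOp [Fintype n] [Fintype m] (K : Matrix m n ℂ) : MatMap n m where
  toFun ρ := K * ρ * Kᴴ
  map_add' ρ ρ' := by simp [Matrix.mul_add, Matrix.add_mul]
  map_smul' c ρ := by simp [Matrix.mul_smul, Matrix.smul_mul]

end QI

end


noncomputable section Helpers

namespace QI

open Matrix

variable {n m p m₁ m₂ k₁ k₂ : Type*}

lemma sum_comm4 {α β γ δ M : Type*} [Fintype α] [Fintype β] [Fintype γ] [Fintype δ]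
    [AddCommMonoid M] (f : α → β → γ → δ → M) :
    ∑ i, ∑ j, ∑ k, ∑ l, f i j k l = ∑ j, ∑ l, ∑ i, ∑ k, f i j k l := by
  rw [Finset.sum_comm]
  refine Finset.sum_congr rfl fun j _ => ?_
  rw [show (∑ i, ∑ k, ∑ l, f i j k l) = ∑ i, ∑ l, ∑ k, f i j k l from
    Finset.sum_congr rfl fun i _ => Finset.sum_comm]
  exact Finset.sum_comm

lemma sum_comm5 {ε α β γ δ M : Type*} [Fintype ε] [Fintype α] [Fintype β] [Fintype γ] [Fintype δ]
    [AddCommMonoid M] (f : ε → α → β → γ → δ → M) :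
    ∑ u, ∑ i, ∑ j, ∑ k, ∑ l, f u i j k l = ∑ i, ∑ j, ∑ k, ∑ l, ∑ u, f u i j k l := by
  rw [Finset.sum_comm]
  refine Finset.sum_congr rfl fun i _ => ?_
  rw [Finset.sum_comm]
  refine Finset.sum_congr rfl fun j _ => ?_
  rw [Finset.sum_comm]
  refine Finset.sum_congr rfl fun k _ => ?_
  rw [Finset.sum_comm]

/-- Expansion of a superoperator through the Choi entries. -/
lemma map_apply_eq_sum [Fintype n] [DecidableEq n] [Fintype m]
    (Φ : MatMap n m) (ρ : Matrix n n ℂ) (s t : m) :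
    Φ ρ s t = ∑ i, ∑ j, ρ i j * Φ (Matrix.single i j 1) s t := by
  have hρ : ρ = ∑ i, ∑ j, ρ i j • Matrix.single i j (1 : ℂ) := by
    conv_lhs => rw [matrix_eq_sum_single ρ]
    simp [smul_single]
  conv_lhs => rw [hρ]
  simp only [map_sum, LinearMap.map_smul, Matrix.sum_apply, Matrix.smul_apply, smul_eq_mul]

lemma ext_of_choi [Fintype n] [DecidableEq n] [Fintype m]
    {Φ Ψ : MatMap n m} (h : choi Φ = choi Ψ) : Φ = Ψ := by
  apply LinearMap.ext; intro ρ
  ext s t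
  rw [map_apply_eq_sum, map_apply_eq_sum]
  refine Finset.sum_congr rfl fun i _ => Finset.sum_congr rfl fun j _ => ?_
  have h2 : Φ (Matrix.single i j 1) s t = Ψ (Matrix.single i j 1) s t :=
    congrFun (congrFun h (i, s)) (j, t)
  rw [h2]

lemma krausOp_apply [Fintype n] [Fintype m] (K : Matrix m n ℂ) (ρ : Matrix n n ℂ) :
    krausOp K ρ = K * ρ * Kᴴ := rfl

lemma krausOp_stdBasis [Fintype n] [DecidableEq n] [Fintype m]
    (K : Matrix m n ℂ) (i j : n) (s t : m) :
    krausOp K (Matrix.single i j 1) s t = K s i * star (K t j) := by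
  simp [krausOp_apply, Matrix.mul_apply, conjTranspose_apply, Matrix.single,
    ite_and, Finset.sum_ite_eq, mul_ite, ite_mul, Finset.mul_sum]

lemma choi_krausOp [Fintype n] [DecidableEq n] [Fintype m] (K : Matrix m n ℂ) :
    choi (krausOp K) = fun p q => K p.2 p.1 * star (K q.2 q.1) := by
  ext p q
  simp [choi, krausOp_stdBasis]

lemma isCP_krausOp [Fintype n] [DecidableEq n] [Fintype m] (K : Matrix m n ℂ) :
    IsCP (krausOp K) := by
  rw [IsCP, Matrix.posSemidef_iff_dotProduct_mulVec]
  constructor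
  · show (choi (krausOp K))ᴴ = choi (krausOp K)
    ext p q
    rw [conjTranspose_apply]
    simp [choi_krausOp, conjTranspose_apply, mul_comm]
  · intro x
    set v : (n × m) → ℂ := fun p => K p.2 p.1 with hv
    set z : ℂ := ∑ q, star (v q) * x q with hz
    have key : star x ⬝ᵥ choi (krausOp K) *ᵥ x = star z * z := by
      have hsz : star z = ∑ p, star (x p) * v p := by
        rw [hz, star_sum]
        exact Finset.sum_congr rfl fun p _ => by simp [mul_comm]
      rw [hsz, hz, Finset.sum_mul_sum]
      simp only [dotProduct, Matrix.mulVec, choi_krausOp, Finset.mul_sum]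
      refine Finset.sum_congr rfl fun p _ => Finset.sum_congr rfl fun q _ => ?_
      simp only [hv, Pi.star_apply]
      ring
    rw [key]
    exact star_mul_self_nonneg z

lemma choi_sum {α : Type*} [Fintype n] [DecidableEq n] [Fintype m]
    (s : Finset α) (Φ : α → MatMap n m) :
    choi (∑ a ∈ s, Φ a) = ∑ a ∈ s, choi (Φ a) := by
  ext p q
  simp [choi, LinearMap.sum_apply, Matrix.sum_apply]

lemma posSemidef_sum {α : Type*} [Fintype m] (s : Finset α) (M : α → Matrix m m ℂ)
    (h : ∀ a ∈ s, (M a).PosSemidef) : (∑ a ∈ s, M a).PosSemidef :=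
  Finset.sum_induction M (fun N => N.PosSemidef) (fun _ _ ha hb => ha.add hb)
    Matrix.PosSemidef.zero h

lemma isCP_sum {α : Type*} [Fintype n] [DecidableEq n] [Fintype m]
    (s : Finset α) (Φ : α → MatMap n m) (h : ∀ a ∈ s, IsCP (Φ a)) :
    IsCP (∑ a ∈ s, Φ a) := by
  rw [IsCP, choi_sum]
  exact posSemidef_sum s _ h

lemma kraus_of_isCP [Fintype n] [DecidableEq n] [Fintype m]
    {Φ : MatMap n m} (h : IsCP Φ) :
    ∃ K : (n × m) → Matrix m n ℂ, Φ = ∑ a, krausOp (K a) := by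
  classical
  open scoped MatrixOrder in
  obtain ⟨B, hB⟩ := CStarAlgebra.nonneg_iff_eq_star_mul_self.mp (Matrix.PosSemidef.nonneg h)
  refine ⟨fun a => Matrix.of fun s i => star (B a (i, s)), ?_⟩
  apply ext_of_choi
  rw [choi_sum]
  ext p q
  obtain ⟨i, s⟩ := p
  obtain ⟨j, t⟩ := q
  have h1 : choi Φ (i, s) (j, t) = (Bᴴ * B) (i, s) (j, t) := by rw [hB]; rfl
  rw [Matrix.sum_apply]
  simp only [choi_krausOp]
  rw [h1]
  simp [Matrix.mul_apply, conjTranspose_apply]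

lemma krausOp_comp [Fintype n] [Fintype m] [Fintype p]
    (K : Matrix m n ℂ) (L : Matrix p m ℂ) :
    krausOp L ∘ₗ krausOp K = krausOp (L * K) := by
  apply LinearMap.ext; intro ρ
  simp only [LinearMap.comp_apply, krausOp_apply, Matrix.conjTranspose_mul]
  simp [Matrix.mul_assoc]

lemma isCP_comp [Fintype n] [DecidableEq n] [Fintype m] [DecidableEq m] [Fintype p]
    {Φ : MatMap n m} {Ψ : MatMap m p} (hΦ : IsCP Φ) (hΨ : IsCP Ψ) :
    IsCP (Ψ ∘ₗ Φ) := by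
  obtain ⟨K, rfl⟩ := kraus_of_isCP hΦ
  obtain ⟨L, rfl⟩ := kraus_of_isCP hΨ
  have : (∑ b, krausOp (L b)) ∘ₗ (∑ a, krausOp (K a))
      = ∑ b, ∑ a, krausOp (L b * K a) := by
    apply LinearMap.ext; intro ρ
    simp only [LinearMap.comp_apply, LinearMap.sum_apply]
    refine Finset.sum_congr rfl fun b _ => ?_
    rw [map_sum]
    refine Finset.sum_congr rfl fun a _ => ?_
    rw [← krausOp_comp]
    rfl
  rw [this]
  exact isCP_sum _ _ fun b _ => isCP_sum _ _ fun a _ => isCP_krausOp _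

/-- Tensor product of superoperators. -/
def tensorMap [Fintype m₁] [DecidableEq m₁] [Fintype m₂] [DecidableEq m₂]
    [Fintype k₁] [Fintype k₂] (Φ : MatMap m₁ k₁) (Ψ : MatMap m₂ k₂) :
    MatMap (m₁ × m₂) (k₁ × k₂) where
  toFun M := Matrix.of fun pq rs => ∑ i, ∑ j, ∑ k, ∑ l,
    M (i, k) (j, l) * (Φ (Matrix.single i j 1) pq.1 rs.1 * Ψ (Matrix.single k l 1) pq.2 rs.2)
  map_add' M N := by
    ext pq rs
    simp [Finset.sum_add_distrib, add_mul]
  map_smul' c M := by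
    ext pq rs
    simp [Finset.mul_sum, mul_assoc]

lemma tensorMap_apply [Fintype m₁] [DecidableEq m₁] [Fintype m₂] [DecidableEq m₂]
    [Fintype k₁] [Fintype k₂] (Φ : MatMap m₁ k₁) (Ψ : MatMap m₂ k₂)
    (M : Matrix (m₁ × m₂) (m₁ × m₂) ℂ) (pq rs : k₁ × k₂) :
    tensorMap Φ Ψ M pq rs = ∑ i, ∑ j, ∑ k, ∑ l,
      M (i, k) (j, l) * (Φ (Matrix.single i j 1) pq.1 rs.1 * Ψ (Matrix.single k l 1) pq.2 rs.2) :=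
  rfl

lemma sum_comm4' {α β γ δ M : Type*} [Fintype α] [Fintype β] [Fintype γ] [Fintype δ]
    [AddCommMonoid M] (f : α → β → γ → δ → M) :
    ∑ i, ∑ j, ∑ k, ∑ l, f i j k l = ∑ k, ∑ l, ∑ i, ∑ j, f i j k l :=
  calc ∑ i, ∑ j, ∑ k, ∑ l, f i j k l
      = ∑ i, ∑ k, ∑ j, ∑ l, f i j k l :=
        Finset.sum_congr rfl fun i _ => Finset.sum_comm
    _ = ∑ k, ∑ i, ∑ j, ∑ l, f i j k l := Finset.sum_comm
    _ = ∑ k, ∑ i, ∑ l, ∑ j, f i j k l :=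
        Finset.sum_congr rfl fun k _ => Finset.sum_congr rfl fun i _ => Finset.sum_comm
    _ = ∑ k, ∑ l, ∑ i, ∑ j, f i j k l :=
        Finset.sum_congr rfl fun k _ => Finset.sum_comm

lemma sum_comp' {α R A B C : Type*} [Fintype α] [AddCommMonoid A] [AddCommMonoid B]
    [AddCommMonoid C] [CommSemiring R] [Module R A] [Module R B] [Module R C]
    (f : α → (B →ₗ[R] C)) (g : A →ₗ[R] B) :
    (∑ a, f a) ∘ₗ g = ∑ a, f a ∘ₗ g := by
  apply LinearMap.ext; intro ρ
  simp [LinearMap.sum_apply]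

variable [Fintype m₁] [DecidableEq m₁] [Fintype m₂] [DecidableEq m₂] [Fintype k₁] [Fintype k₂]

lemma tensorMap_krausOp (K : Matrix k₁ m₁ ℂ) (L : Matrix k₂ m₂ ℂ) :
    tensorMap (krausOp K) (krausOp L) = krausOp (K ⊗ₖ L) := by
  apply LinearMap.ext; intro M
  ext p q
  obtain ⟨s, u⟩ := p
  obtain ⟨t, v⟩ := q
  have hL : tensorMap (krausOp K) (krausOp L) M (s, u) (t, v)
      = ∑ j, ∑ l, ∑ i, ∑ k,
        M (i, k) (j, l) * (K s i * star (K t j) * (L u k * star (L v l))) := by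
    rw [tensorMap_apply]
    simp only [krausOp_stdBasis]
    exact sum_comm4 _
  have hR : krausOp (K ⊗ₖ L) M (s, u) (t, v)
      = ∑ j, ∑ l, ∑ i, ∑ k,
        M (i, k) (j, l) * (K s i * star (K t j) * (L u k * star (L v l))) := by
    show (K ⊗ₖ L * M * (K ⊗ₖ L)ᴴ) (s, u) (t, v) = _
    rw [Matrix.mul_apply, Fintype.sum_prod_type]
    refine Finset.sum_congr rfl fun j _ => Finset.sum_congr rfl fun l _ => ?_
    rw [Matrix.mul_apply, Fintype.sum_prod_type, Finset.sum_mul]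
    refine Finset.sum_congr rfl fun i _ => ?_
    rw [Finset.sum_mul]
    refine Finset.sum_congr rfl fun k _ => ?_
    simp only [conjTranspose_apply, kroneckerMap_apply, StarMul.star_mul]
    ring
  rw [hL, hR]

lemma tensorMap_zero_left (Ψ : MatMap m₂ k₂) :
    tensorMap (0 : MatMap m₁ k₁) Ψ = 0 := by
  apply LinearMap.ext; intro M
  ext pq rs
  simp [tensorMap_apply]

lemma tensorMap_zero_right (Φ : MatMap m₁ k₁) :
    tensorMap Φ (0 : MatMap m₂ k₂) = 0 := by
  apply LinearMap.ext; intro M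
  ext pq rs
  simp [tensorMap_apply]

lemma tensorMap_add_left (Φ Φ' : MatMap m₁ k₁) (Ψ : MatMap m₂ k₂) :
    tensorMap (Φ + Φ') Ψ = tensorMap Φ Ψ + tensorMap Φ' Ψ := by
  apply LinearMap.ext; intro M
  ext pq rs
  simp [tensorMap_apply, LinearMap.add_apply, Matrix.add_apply, add_mul, mul_add,
    Finset.sum_add_distrib]

lemma tensorMap_add_right (Φ : MatMap m₁ k₁) (Ψ Ψ' : MatMap m₂ k₂) :
    tensorMap Φ (Ψ + Ψ') = tensorMap Φ Ψ + tensorMap Φ Ψ' := by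
  apply LinearMap.ext; intro M
  ext pq rs
  simp [tensorMap_apply, LinearMap.add_apply, Matrix.add_apply, add_mul, mul_add,
    Finset.sum_add_distrib]

lemma tensorMap_sum_left {α : Type*} (s : Finset α) (Φ : α → MatMap m₁ k₁) (Ψ : MatMap m₂ k₂) :
    tensorMap (∑ a ∈ s, Φ a) Ψ = ∑ a ∈ s, tensorMap (Φ a) Ψ := by
  classical
  induction s using Finset.induction_on with
  | empty => simpa using tensorMap_zero_left Ψ
  | insert _ _ ha ih =>
    rename_i a s'
    rw [Finset.sum_insert ha, Finset.sum_insert ha, tensorMap_add_left, ih]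

lemma tensorMap_sum_right {α : Type*} (s : Finset α) (Φ : MatMap m₁ k₁) (Ψ : α → MatMap m₂ k₂) :
    tensorMap Φ (∑ a ∈ s, Ψ a) = ∑ a ∈ s, tensorMap Φ (Ψ a) := by
  classical
  induction s using Finset.induction_on with
  | empty => simpa using tensorMap_zero_right Φ
  | insert _ _ ha ih =>
    rename_i a s'
    rw [Finset.sum_insert ha, Finset.sum_insert ha, tensorMap_add_right, ih]

lemma isCP_tensorMap {Φ : MatMap m₁ k₁} {Ψ : MatMap m₂ k₂} (hΦ : IsCP Φ) (hΨ : IsCP Ψ) :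
    IsCP (tensorMap Φ Ψ) := by
  obtain ⟨K, rfl⟩ := kraus_of_isCP hΦ
  obtain ⟨L, rfl⟩ := kraus_of_isCP hΨ
  rw [tensorMap_sum_left]
  refine isCP_sum _ _ fun a _ => ?_
  rw [tensorMap_sum_right]
  refine isCP_sum _ _ fun b _ => ?_
  rw [tensorMap_krausOp]
  exact isCP_krausOp _

lemma trace_Matrix.single' {n : Type*} [Fintype n] [DecidableEq n] (i j : n) :
    (Matrix.single i j (1 : ℂ)).trace = if i = j then 1 else 0 := by
  by_cases h : i = j
  · subst h; simp [Matrix.trace, Matrix.diag, Matrix.single, ite_and, Finset.sum_ite_eq]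
  · simp [Matrix.trace, Matrix.diag, Matrix.single, ite_and, h, Finset.sum_ite_eq, Ne.symm h]

lemma trace_eq_sum_diag {n : Type*} [Fintype n] (M : Matrix n n ℂ) :
    M.trace = ∑ i, M i i := rfl

lemma IsTP.trace_stdBasis {n m : Type*} [Fintype n] [DecidableEq n] [Fintype m]
    {Φ : MatMap n m} (hΦ : IsTP Φ) (i j : n) :
    ∑ u, Φ (Matrix.single i j 1) u u = if i = j then 1 else 0 := by
  rw [← trace_eq_sum_diag, hΦ, trace_Matrix.single']

lemma ptrace₂_apply (M : Matrix (m₁ × m₂) (m₁ × m₂) ℂ) (i j : m₁) :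
    ptrace₂ M i j = ∑ k, M (i, k) (j, k) := rfl

lemma ptrace₁_apply (M : Matrix (m₁ × m₂) (m₁ × m₂) ℂ) (i j : m₂) :
    ptrace₁ M i j = ∑ k, M (k, i) (k, j) := rfl

lemma ptrace₂_tensorMap {Φ : MatMap m₁ k₁} {Ψ : MatMap m₂ k₂} (hΨ : IsTP Ψ) :
    ptrace₂ ∘ₗ tensorMap Φ Ψ = Φ ∘ₗ ptrace₂ := by
  apply LinearMap.ext; intro M
  ext s t
  show ∑ u, tensorMap Φ Ψ M (s, u) (t, u) = Φ (ptrace₂ M) s t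
  rw [map_apply_eq_sum Φ (ptrace₂ M) s t]
  simp only [tensorMap_apply]
  rw [sum_comm5]
  refine Finset.sum_congr rfl fun i _ => Finset.sum_congr rfl fun j _ => ?_
  rw [ptrace₂_apply, Finset.sum_mul]
  refine Finset.sum_congr rfl fun k _ => ?_
  have hcol : ∀ l, ∑ u, M (i, k) (j, l) *
      (Φ (Matrix.single i j 1) s t * Ψ (Matrix.single k l 1) u u)
      = if k = l then M (i, k) (j, l) * Φ (Matrix.single i j 1) s t else 0 := by
    intro l
    rw [← Finset.mul_sum, ← Finset.mul_sum, hΨ.trace_stdBasis]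
    by_cases h : k = l <;> simp [h]
  simp only [hcol, Finset.sum_ite_eq, Finset.mem_univ, if_true]

lemma ptrace₁_tensorMap {Φ : MatMap m₁ k₁} {Ψ : MatMap m₂ k₂} (hΦ : IsTP Φ) :
    ptrace₁ ∘ₗ tensorMap Φ Ψ = Ψ ∘ₗ ptrace₁ := by
  apply LinearMap.ext; intro M
  ext s t
  show ∑ u, tensorMap Φ Ψ M (u, s) (u, t) = Ψ (ptrace₁ M) s t
  rw [map_apply_eq_sum Ψ (ptrace₁ M) s t]
  simp only [tensorMap_apply]
  rw [sum_comm5]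
  have hcol : ∀ i j k l, ∑ u, M (i, k) (j, l) *
      (Φ (Matrix.single i j 1) u u * Ψ (Matrix.single k l 1) s t)
      = if i = j then M (i, k) (j, l) * Ψ (Matrix.single k l 1) s t else 0 := by
    intro i j k l
    have : ∀ u, M (i, k) (j, l) *
        (Φ (Matrix.single i j 1) u u * Ψ (Matrix.single k l 1) s t)
        = M (i, k) (j, l) * Ψ (Matrix.single k l 1) s t * Φ (Matrix.single i j 1) u u := by
      intro u; ring
    simp only [this]
    rw [← Finset.mul_sum, hΦ.trace_stdBasis]
    by_cases h : i = j <;> simp [h]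
  simp only [hcol]
  rw [sum_comm4']
  refine Finset.sum_congr rfl fun k _ => Finset.sum_congr rfl fun l _ => ?_
  rw [ptrace₁_apply, Finset.sum_mul]
  refine Finset.sum_congr rfl fun i _ => ?_
  simp [Finset.sum_ite_eq, Finset.mem_univ]

lemma trace_ptrace₂ {a b : Type*} [Fintype a] [Fintype b] (M : Matrix (a × b) (a × b) ℂ) :
    (ptrace₂ M).trace = M.trace := by
  rw [trace_eq_sum_diag, trace_eq_sum_diag, Fintype.sum_prod_type]
  exact Finset.sum_congr rfl fun i _ => rfl

lemma isTP_tensorMap {Φ : MatMap m₁ k₁} {Ψ : MatMap m₂ k₂} (hΦ : IsTP Φ) (hΨ : IsTP Ψ) :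
    IsTP (tensorMap Φ Ψ) := by
  intro M
  have h1 : ptrace₂ (tensorMap Φ Ψ M) = Φ (ptrace₂ M) :=
    LinearMap.congr_fun (ptrace₂_tensorMap hΨ) M
  calc (tensorMap Φ Ψ M).trace
      = (ptrace₂ (tensorMap Φ Ψ M)).trace := (trace_ptrace₂ _).symm
    _ = (Φ (ptrace₂ M)).trace := by rw [h1]
    _ = (ptrace₂ M).trace := hΦ _
    _ = M.trace := trace_ptrace₂ _


end QI

end Helpers

open QI in
/-- post-processing preserves parallel compatibility. -/
theorem postprocessing_preserves_compatibility
    {ι₁ ι₂ κ₁ κ₂ n m₁ m₂ k₁ k₂ : Type*}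
    [Fintype ι₁] [Fintype ι₂] [Fintype κ₁] [Fintype κ₂]
    [Fintype n] [DecidableEq n]
    [Fintype m₁] [DecidableEq m₁] [Fintype m₂] [DecidableEq m₂]
    [Fintype k₁] [Fintype k₂]
    (I₁ : Instrument ι₁ n m₁) (I₂ : Instrument ι₂ n m₂)
    (J₁ : Instrument κ₁ n k₁) (J₂ : Instrument κ₂ n k₂)
    (h : ParallelCompatible I₁ I₂)
    (h₁ : PostProcessingOf J₁ I₁) (h₂ : PostProcessingOf J₂ I₂) :
    ParallelCompatible J₁ J₂ := by
  classical
  obtain ⟨J, hJm₁, hJm₂⟩ := h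
  obtain ⟨R1, hR1⟩ := h₁
  obtain ⟨R2, hR2⟩ := h₂
  refine ⟨⟨fun p => ∑ x, ∑ y, tensorMap ((R1 x).op p.1) ((R2 y).op p.2) ∘ₗ J.op (x, y),
    ?_, ?_⟩, ?_, ?_⟩
  · -- complete positivity
    intro p
    refine isCP_sum _ _ fun x _ => isCP_sum _ _ fun y _ => ?_
    exact isCP_comp (J.cp (x, y)) (isCP_tensorMap ((R1 x).cp p.1) ((R2 y).cp p.2))
  · -- trace preservation
    have h2 : ∀ (x : ι₁) (y : ι₂),
        tensorMap (∑ xt, (R1 x).op xt) (∑ yt, (R2 y).op yt) ∘ₗ J.op (x, y)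
        = ∑ xt, ∑ yt, tensorMap ((R1 x).op xt) ((R2 y).op yt) ∘ₗ J.op (x, y) := by
      intro x y
      rw [tensorMap_sum_left, sum_comp']
      refine Finset.sum_congr rfl fun xt _ => ?_
      rw [tensorMap_sum_right, sum_comp']
    have key : (∑ p : κ₁ × κ₂, ∑ x, ∑ y,
        tensorMap ((R1 x).op p.1) ((R2 y).op p.2) ∘ₗ J.op (x, y))
        = ∑ x, ∑ y, tensorMap (∑ xt, (R1 x).op xt) (∑ yt, (R2 y).op yt) ∘ₗ J.op (x, y) := by
      rw [Fintype.sum_prod_type]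
      rw [sum_comm4' fun xt yt x y => tensorMap ((R1 x).op xt) ((R2 y).op yt) ∘ₗ J.op (x, y)]
      exact Finset.sum_congr rfl fun x _ => Finset.sum_congr rfl fun y _ => (h2 x y).symm
    rw [key]
    intro ρ
    have lhs : ((∑ x, ∑ y, tensorMap (∑ xt, (R1 x).op xt) (∑ yt, (R2 y).op yt)
        ∘ₗ J.op (x, y)) ρ).trace = ∑ x, ∑ y, ((J.op (x, y)) ρ).trace := by
      simp only [LinearMap.sum_apply, LinearMap.comp_apply, Matrix.trace_sum]
      exact Finset.sum_congr rfl fun x _ => Finset.sum_congr rfl fun y _ =>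
        isTP_tensorMap (R1 x).tp (R2 y).tp _
    rw [lhs]
    have h3 := J.tp ρ
    simp only [LinearMap.sum_apply, Fintype.sum_prod_type, Matrix.trace_sum] at h3
    exact h3
  · -- first marginal
    intro xt
    apply LinearMap.ext; intro ρ
    have lhs1 : (∑ yt, ptrace₂ ∘ₗ ∑ x, ∑ y,
          tensorMap ((R1 x).op xt) ((R2 y).op yt) ∘ₗ J.op (x, y)) ρ
        = ∑ x, ∑ y, ∑ yt,
          ptrace₂ (tensorMap ((R1 x).op xt) ((R2 y).op yt) (J.op (x, y) ρ)) := by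
      simp only [LinearMap.sum_apply, LinearMap.comp_apply, map_sum]
      rw [Finset.sum_comm]
      exact Finset.sum_congr rfl fun x _ => Finset.sum_comm
    rw [lhs1]
    have step2 : ∀ (x : ι₁) (y : ι₂),
        ∑ yt, ptrace₂ (tensorMap ((R1 x).op xt) ((R2 y).op yt) (J.op (x, y) ρ))
        = (R1 x).op xt (ptrace₂ (J.op (x, y) ρ)) := by
      intro x y
      have ht : ∑ yt, tensorMap ((R1 x).op xt) ((R2 y).op yt) (J.op (x, y) ρ)
          = tensorMap ((R1 x).op xt) (∑ yt, (R2 y).op yt) (J.op (x, y) ρ) := by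
        rw [tensorMap_sum_right]
        simp [LinearMap.sum_apply]
      rw [← map_sum, ht]
      have := LinearMap.congr_fun (ptrace₂_tensorMap (Φ := (R1 x).op xt) (R2 y).tp)
        (J.op (x, y) ρ)
      simpa using this
    simp only [step2]
    rw [hR1 xt]
    simp only [LinearMap.sum_apply, LinearMap.comp_apply]
    refine Finset.sum_congr rfl fun x _ => ?_
    rw [← map_sum]
    congr 1
    have := LinearMap.congr_fun (hJm₁ x) ρ
    simpa [LinearMap.sum_apply, LinearMap.comp_apply] using this
  · -- second marginal
    intro yt
    apply LinearMap.ext; intro ρ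
    have lhs1 : (∑ xt, ptrace₁ ∘ₗ ∑ x, ∑ y,
          tensorMap ((R1 x).op xt) ((R2 y).op yt) ∘ₗ J.op (x, y)) ρ
        = ∑ x, ∑ y, ∑ xt,
          ptrace₁ (tensorMap ((R1 x).op xt) ((R2 y).op yt) (J.op (x, y) ρ)) := by
      simp only [LinearMap.sum_apply, LinearMap.comp_apply, map_sum]
      rw [Finset.sum_comm]
      exact Finset.sum_congr rfl fun x _ => Finset.sum_comm
    rw [lhs1]
    have step2 : ∀ (x : ι₁) (y : ι₂),
        ∑ xt, ptrace₁ (tensorMap ((R1 x).op xt) ((R2 y).op yt) (J.op (x, y) ρ))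
        = (R2 y).op yt (ptrace₁ (J.op (x, y) ρ)) := by
      intro x y
      have ht : ∑ xt, tensorMap ((R1 x).op xt) ((R2 y).op yt) (J.op (x, y) ρ)
          = tensorMap (∑ xt, (R1 x).op xt) ((R2 y).op yt) (J.op (x, y) ρ) := by
        rw [tensorMap_sum_left]
        simp [LinearMap.sum_apply]
      rw [← map_sum, ht]
      have := LinearMap.congr_fun (ptrace₁_tensorMap (Ψ := (R2 y).op yt) (R1 x).tp)
        (J.op (x, y) ρ)
      simpa using this
    simp only [step2]
    rw [hR2 yt]
    simp only [LinearMap.sum_apply, LinearMap.comp_apply]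
    rw [Finset.sum_comm]
    refine Finset.sum_congr rfl fun y _ => ?_
    rw [← map_sum]
    congr 1
    have := LinearMap.congr_fun (hJm₂ y) ρ
    simpa [LinearMap.sum_apply, LinearMap.comp_apply] using this
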